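/- Fix π ∈ ℤ^n. Let S_π be the set of pairs (λ, μ) ∈ ℤ^n × ℤ^n with λ + μ = π, preordered by (λ',μ') ⊑ (λ,μ) iff Π(λ',μ') ⊆ Π(λ,μ). Let C_π be the set of δ ∈ ℤ^n with δ ≡ π mod 2 (coordinatewise), preordered by δ' ⪯ δ iff |δ'_i − δ'_j| ≤ |δ_i − δ_j| for all i < j. Then the map (λ,μ) ↦ μ − λ is an order-isomorphism of preorders from S_π to C_π, with inverse δ ↦ ((π−δ)/2, (π+δ)/2). In particular, Π(λ',μ') ⊆ Π(λ,μ) if and only if |(μ'−λ')_i − (μ'−λ')_j| ≤ |(μ−λ)_i − (μ−λ)_j| for all i < j. -/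
import Mathlib


def PiSet {n : ℕ} (x y : Fin n → ℤ) : Set (Fin n → ℤ) :=
  {z | ∀ i j : Fin n, i < j →
    min (x i - x j) (y i - y j) ≤ z i - z j ∧ z i - z j ≤ max (x i - x j) (y i - y j)}

/-- The map (λ,μ) ↦ μ - λ is an isomorphism of preorders from S_π (pairs summing to π,
ordered by Π-containment) to C_π (vectors ≡ π mod 2, ordered by coordinate gap
comparison), with inverse δ ↦ ((π-δ)/2, (π+δ)/2). -/
theorem stmt17 (n : ℕ) (p lam mu lam' mu' : Fin n → ℤ)
    (h : lam + mu = p) (h' : lam' + mu' = p) :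
    (∀ i, (mu - lam) i % 2 = p i % 2) ∧
    ((fun i => (p i - (mu i - lam i)) / 2) = lam) ∧
    ((fun i => (p i + (mu i - lam i)) / 2) = mu) ∧
    (PiSet lam' mu' ⊆ PiSet lam mu ↔
      ∀ i j : Fin n, i < j →
        |(mu' - lam') i - (mu' - lam') j| ≤ |(mu - lam) i - (mu - lam) j|) := by
  have hp : ∀ i, lam i + mu i = p i := fun i => congrFun h i
  have hp' : ∀ i, lam' i + mu' i = p i := fun i => congrFun h' i
  refine ⟨?_, ?_, ?_, ?_⟩
  · intro i
    have := hp i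
    simp only [Pi.sub_apply]
    omega
  · funext i
    have := hp i
    omega
  · funext i
    have := hp i
    omega
  · constructor
    · intro hsub i j hij
      have h1 : lam' ∈ PiSet lam' mu' := fun a b _ =>
        ⟨min_le_left _ _, le_max_left _ _⟩
      have h2 : mu' ∈ PiSet lam' mu' := fun a b _ =>
        ⟨min_le_right _ _, le_max_right _ _⟩
      have A := hsub h1 i j hij
      have B := hsub h2 i j hij
      have e1 := hp i; have e2 := hp j; have e3 := hp' i; have e4 := hp' j
      simp only [Pi.sub_apply, Int.abs_eq_natAbs] at *
      omega
    · intro hd z hz i j hij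
      have hz' := hz i j hij
      have key := hd i j hij
      have e1 := hp i; have e2 := hp j; have e3 := hp' i; have e4 := hp' j
      simp only [Pi.sub_apply, Int.abs_eq_natAbs] at *
      omega
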